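/- Let a, b be rational numbers with a⁸·b³·(a − 27b) ≠ 0. Then the point (0, 0) on the elliptic curve y² + a·xy + a²b·y = x³ over ℚ has order exactly 3 in the group of rational points. -/

import Mathlib

theorem stmt_8 (a b : ℚ) (hΔ : a ^ 8 * b ^ 3 * (a - 27 * b) ≠ 0)
    (h : (⟨a, 0, a ^ 2 * b, 0, 0⟩ : WeierstrassCurve ℚ).toAffine.Nonsingular 0 0) :
    addOrderOf (WeierstrassCurve.Affine.Point.some _ _ h) = 3 := by
  let W : WeierstrassCurve.Affine ℚ := (⟨a, 0, a ^ 2 * b, 0, 0⟩ : WeierstrassCurve ℚ).toAffine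
  have ha : a ≠ 0 := fun h0 => hΔ (by rw [h0]; ring)
  have hb : b ≠ 0 := fun h0 => hΔ (by rw [h0]; ring)
  have hab : a ^ 2 * b ≠ 0 := mul_ne_zero (pow_ne_zero 2 ha) hb
  have hneg : (0 : ℚ) ≠ W.negY 0 0 := by
    simp only [WeierstrassCurve.Affine.negY, W]
    intro hc; apply hab; linarith
  have hslope : W.slope 0 0 0 0 = 0 := by
    rw [WeierstrassCurve.Affine.slope_of_Y_ne rfl hneg]
    simp [W]
  have hx : W.addX 0 0 (W.slope 0 0 0 0) = 0 := by
    simp [hslope, W]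
  have hy : W.addY 0 0 0 (W.slope 0 0 0 0) = W.negY 0 0 := by
    simp [WeierstrassCurve.Affine.addY, WeierstrassCurve.Affine.negAddY, hslope, hx, W]
  have h3 : (3 : ℕ) • WeierstrassCurve.Affine.Point.some _ _ h = 0 := by
    have h2 := WeierstrassCurve.Affine.Point.add_self_of_Y_ne (h₁ := h) hneg
    rw [succ_nsmul, two_nsmul]
    rw [h2, WeierstrassCurve.Affine.Point.add_of_Y_eq hx hy]
  haveI : Fact (Nat.Prime 3) := ⟨by norm_num⟩
  exact addOrderOf_eq_prime h3 (by simp [WeierstrassCurve.Affine.Point.zero_def])
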